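/- Let i = (i₁,…,i_N) be a finite sequence with entries in {1,2} containing l₁ ones and l₂ twos, let d = gcd(l₁,l₂) and s_m = l_m/d for m = 1,2. Then there exists a cyclically consecutive subsequence i' of i of length s₁ + s₂ containing exactly s₁ ones. -/

import Mathlib

private lemma ivt_up (f : ℕ → ℕ) (h1 : ∀ k, f (k + 1) ≤ f k + 1) (s a : ℕ) :
    ∀ b, f a ≤ s → s ≤ f (a + b) → ∃ k, f k = s := by
  intro b
  induction b with
  | zero => intro ha hb; exact ⟨a, le_antisymm ha hb⟩
  | succ b ih =>
    intro ha hb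
    by_cases h : s ≤ f (a + b)
    · exact ih ha h
    · refine ⟨a + b + 1, ?_⟩
      have h2 := h1 (a + b)
      have hb' : s ≤ f (a + b + 1) := by
        have : a + (b + 1) = a + b + 1 := by omega
        rwa [this] at hb
      omega

private lemma ivt_down (f : ℕ → ℕ) (h2 : ∀ k, f k ≤ f (k + 1) + 1) (s a : ℕ) :
    ∀ b, s ≤ f a → f (a + b) ≤ s → ∃ k, f k = s := by
  intro b
  induction b with
  | zero => intro ha hb; exact ⟨a, le_antisymm hb ha⟩
  | succ b ih =>
    intro ha hb
    by_cases h : f (a + b) ≤ s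
    · exact ih ha h
    · refine ⟨a + b + 1, ?_⟩
      have h3 := h2 (a + b)
      have hb' : f (a + b + 1) ≤ s := by
        have : a + (b + 1) = a + b + 1 := by omega
        rwa [this] at hb
      omega

private lemma count_eq_sum_getD (w : List Bool) :
    w.count false = ∑ i ∈ Finset.range w.length, (if w.getD i true = false then 1 else 0) := by
  induction w with
  | nil => simp
  | cons a t ih =>
    rw [List.length_cons, Finset.sum_range_succ']
    simp [List.count_cons, ih, Nat.add_comm]

theorem stmt8 (l : List Bool) (l₁ l₂ d s₁ s₂ : ℕ)
    (h₁ : l₁ = l.count false) (h₂ : l₂ = l.count true)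
    (hd : d = Nat.gcd l₁ l₂) (hs₁ : s₁ = l₁ / d) (hs₂ : s₂ = l₂ / d) :
    ∃ k : ℕ, ((l.rotate k).take (s₁ + s₂)).length = s₁ + s₂ ∧
      ((l.rotate k).take (s₁ + s₂)).count false = s₁ := by
  rcases eq_or_ne l [] with rfl | hne
  · subst h₁ h₂ hd hs₁ hs₂; exact ⟨0, by simp⟩
  set N := l.length with hN
  have hN0 : 0 < N := List.length_pos_iff.mpr hne
  have hsum : l₁ + l₂ = N := by rw [h₁, h₂]; exact l.count_false_add_count_true
  have hd1 : d ∣ l₁ := hd ▸ Nat.gcd_dvd_left _ _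
  have hd2 : d ∣ l₂ := hd ▸ Nat.gcd_dvd_right _ _
  have hd0 : 0 < d := by
    rcases Nat.eq_zero_or_pos d with h0 | h
    · exfalso
      rw [hd] at h0
      have := Nat.gcd_eq_zero_iff.mp h0
      omega
    · exact h
  set L := s₁ + s₂ with hLdef
  have hdL : d * L = N := by
    rw [hLdef, hs₁, hs₂, Nat.mul_add, Nat.mul_div_cancel' hd1, Nat.mul_div_cancel' hd2]
    exact hsum
  have hLN : L ≤ N := by
    rw [← hdL]; exact Nat.le_mul_of_pos_left L hd0
  -- indicator of position k (mod N) being false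
  set c : ℕ → ℕ := fun k => if l.getD (k % N) true = false then 1 else 0 with hc
  have hcper : ∀ k, c (k + N) = c k := by
    intro k; simp only [hc, Nat.add_mod_right]
  have hcbound : ∀ k, c k ≤ 1 := by
    intro k; simp only [hc]; split <;> omega
  -- window count
  have hwin : ∀ k, ((l.rotate k).take L).count false = ∑ j ∈ Finset.range L, c (k + j) := by
    intro k
    rw [count_eq_sum_getD]
    have hlen : ((l.rotate k).take L).length = L := by
      rw [List.length_take, List.length_rotate]; omega
    rw [hlen]
    refine Finset.sum_congr rfl fun j hj => ?_
    rw [Finset.mem_range] at hj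
    have hj2 : j < (l.rotate k).length := by rw [List.length_rotate]; omega
    have hv : ((l.rotate k).take L).getD j true = l.getD ((k + j) % N) true := by
      rw [List.getD_eq_getElem _ _ (by rw [hlen]; exact hj),
        List.getElem_take, List.getElem_rotate,
        List.getD_eq_getElem _ _ (Nat.mod_lt _ hN0), Nat.add_comm j k]
    rw [hv]
  -- prefix sums
  set F : ℕ → ℕ := fun t => ∑ j ∈ Finset.range t, c j with hF
  set f : ℕ → ℕ := fun k => ∑ j ∈ Finset.range L, c (k + j) with hf
  have hFadd : ∀ k t, F (k + t) = F k + ∑ j ∈ Finset.range t, c (k + j) :=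
    fun k t => Finset.sum_range_add c k t
  have hFN : F N = l₁ := by
    rw [h₁, count_eq_sum_getD, hF]
    refine Finset.sum_congr rfl fun j hj => ?_
    rw [Finset.mem_range] at hj
    simp only [hc, hN, Nat.mod_eq_of_lt hj]
  have hl₁ : l₁ = d * s₁ := by rw [hs₁, Nat.mul_div_cancel' hd1]
  -- telescoping
  have htel : ∀ m : ℕ, F (m * L) = ∑ i ∈ Finset.range m, f (i * L) := by
    intro m
    induction m with
    | zero => simp [hF]
    | succ m ih =>
      rw [Finset.sum_range_succ, ← ih, Nat.succ_mul, hFadd]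
  have hsumf : ∑ i ∈ Finset.range d, f (i * L) = ∑ i ∈ Finset.range d, s₁ := by
    rw [← htel, hdL, hFN, hl₁, Finset.sum_const, Finset.card_range, smul_eq_mul]
  have hdne : (Finset.range d).Nonempty := Finset.nonempty_range_iff.mpr (by omega)
  obtain ⟨i, -, hi⟩ := Finset.exists_le_of_sum_le hdne (le_of_eq hsumf)
  obtain ⟨j, -, hj⟩ := Finset.exists_le_of_sum_le hdne (le_of_eq hsumf.symm)
  -- step bounds
  have hfstep : ∀ k, f (k + 1) + c k = f k + c (k + L) := by
    intro k
    have e1 := Finset.sum_range_succ (fun j => c (k + j)) L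
    have e2 := Finset.sum_range_succ' (fun j => c (k + j)) L
    have e3 : (∑ j ∈ Finset.range L, c (k + (j + 1))) = f (k + 1) :=
      Finset.sum_congr rfl fun j _ => congrArg c (by omega)
    simp only [Nat.add_zero] at e2
    rw [e3] at e2
    change (∑ j ∈ Finset.range (L+1), c (k + j)) = f k + c (k + L) at e1
    omega
  have h1' : ∀ k, f (k + 1) ≤ f k + 1 := by
    intro k; have := hfstep k; have := hcbound k; have := hcbound (k + L); omega
  have h2' : ∀ k, f k ≤ f (k + 1) + 1 := by
    intro k; have := hfstep k; have := hcbound k; have := hcbound (k + L); omega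
  -- conclude
  have hex : ∃ k, f k = s₁ := by
    rcases le_or_gt (i * L) (j * L) with hab | hab
    · exact ivt_up f h1' s₁ (i * L) (j * L - i * L) hi
        (by rwa [Nat.add_sub_cancel' hab])
    · exact ivt_down f h2' s₁ (j * L) (i * L - j * L) hj
        (by rwa [Nat.add_sub_cancel' hab.le])
  obtain ⟨k, hk⟩ := hex
  refine ⟨k, ?_, ?_⟩
  · rw [List.length_take, List.length_rotate]; omega
  · rw [hwin k]; exact hk
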